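/- Let S be a finite monoid, A a finite set, Q ⊆ SRel(A), and F := SPol Q. For every signum λ = (s_1, …, s_n) ∈ S^n, the e-components agree: Γ_F(χ^λ)_e = γ_Q(χ^λ)_e, where γ_Q(χ^λ) is the least S-relation in [Q]_S of the same arity containing χ^λ. -/

import Mathlib

namespace SPreclone

/-- An `S`-operation on `A`: an `(n+1)`-ary operation together with a signum
assigning an element of `S` to each argument. -/
structure SOp (S A : Type*) where
  n : ℕ
  fn : (Fin (n + 1) → A) → A
  sgn : Fin (n + 1) → S

/-- An `S`-relation on `A`: a family of `(m+1)`-ary relations indexed by `S`. -/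
structure SRel (S A : Type*) where
  m : ℕ
  rel : S → Set (Fin (m + 1) → A)

section

variable {S A : Type*} [Monoid S]

/-- `f` S-preserves `ρ`. -/
def SPreserves (f : SOp S A) (ρ : SRel S A) : Prop :=
  ∀ s : S, ∀ r : Fin (f.n + 1) → (Fin (ρ.m + 1) → A),
    (∀ i, r i ∈ ρ.rel (f.sgn i * s)) →
    (fun j => f.fn fun i => r i j) ∈ ρ.rel s

/-- `S`-polymorphisms of a set of `S`-relations. -/
def SPol (Q : Set (SRel S A)) : Set (SOp S A) := { f | ∀ ρ ∈ Q, SPreserves f ρ }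

/-- Invariant `S`-relations of a set of `S`-operations. -/
def SInv (F : Set (SOp S A)) : Set (SRel S A) := { ρ | ∀ f ∈ F, SPreserves f ρ }

/-- The identity operation, with signum `(e)`. -/
def idOp (S A : Type*) [Monoid S] : SOp S A := ⟨0, fun x => x 0, fun _ => 1⟩

/-- Cyclic shift `ζ` of the arguments (and the signa). -/
def cycOp (f : SOp S A) : SOp S A :=
  ⟨f.n, fun x => f.fn fun j => x (j + 1), fun i => f.sgn (i - 1)⟩

/-- Transposition `τ` of the first two arguments (and their signa). -/
def swapOp (f : SOp S A) : SOp S A :=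
  ⟨f.n, fun x => f.fn fun j => x (Equiv.swap 0 1 j), fun i => f.sgn (Equiv.swap 0 1 i)⟩

/-- `∇^s`: adding a fictitious first argument with signum `s`. -/
def nablaOp (s : S) (f : SOp S A) : SOp S A :=
  ⟨f.n + 1, fun x => f.fn fun j => x j.succ, Fin.cases (motive := fun _ => S) s f.sgn⟩

open Classical in
/-- `Δ`: identification of the first two arguments when they have the same signum
(otherwise, and for unary operations, `Δ f := f`). -/
noncomputable def deltaOp (f : SOp S A) : SOp S A :=
  match f with
  | ⟨0, fn, sgn⟩ => ⟨0, fn, sgn⟩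
  | ⟨m + 1, fn, sgn⟩ =>
    if sgn 0 = sgn 1 then
      ⟨m, fun x => fn fun j => x ⟨j.val - 1, by have := j.isLt; omega⟩,
        fun i => sgn i.succ⟩
    else ⟨m + 1, fn, sgn⟩

/-- Composition `(f ∘ g)(x₁,…,x_m,x_{m+1},…,x_{m+n-1}) = f(g(x₁,…,x_m),x_{m+1},…,x_{m+n-1})`,
with signum `(s'₁s₁, …, s'_m s₁, s₂, …, s_n)`. -/
def compOp (f g : SOp S A) : SOp S A :=
  ⟨g.n + f.n,
   fun x => f.fn fun k => Fin.cases (motive := fun _ => A)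
     (g.fn fun i => x ⟨i.val, by have := i.isLt; omega⟩)
     (fun j => x ⟨g.n + 1 + j.val, by have := j.isLt; omega⟩) k,
   fun i =>
     if h : i.val < g.n + 1 then g.sgn ⟨i.val, h⟩ * f.sgn 0
     else f.sgn ⟨i.val - g.n, by have := i.isLt; omega⟩⟩

/-- A set of `S`-operations is an `S`-preclone if it contains the identity and is closed
under `ζ`, `τ`, `∇^s`, `Δ` and composition. -/
def IsSPreclone (F : Set (SOp S A)) : Prop :=
  idOp S A ∈ F ∧
  (∀ f ∈ F, cycOp f ∈ F) ∧
  (∀ f ∈ F, swapOp f ∈ F) ∧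
  (∀ (s : S), ∀ f ∈ F, nablaOp s f ∈ F) ∧
  (∀ f ∈ F, deltaOp f ∈ F) ∧
  (∀ f ∈ F, ∀ g ∈ F, compOp f g ∈ F)

/-- The `S`-preclone generated by `F` (the least `S`-preclone containing `F`). -/
def SSg (F : Set (SOp S A)) : Set (SOp S A) := ⋂₀ { G | IsSPreclone G ∧ F ⊆ G }

/-- `δ^S := (Δ_A)_{s ∈ S}`. -/
def deltaS (S A : Type*) : SRel S A := ⟨1, fun _ => { a | a 0 = a 1 }⟩

/-- Componentwise cyclic shift of coordinates. -/
def cycRel (ρ : SRel S A) : SRel S A :=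
  ⟨ρ.m, fun s => { b | (fun i => b (i - 1)) ∈ ρ.rel s }⟩

/-- Componentwise transposition of the first two coordinates. -/
def swapRel (ρ : SRel S A) : SRel S A :=
  ⟨ρ.m, fun s => { b | (fun i => b (Equiv.swap 0 1 i)) ∈ ρ.rel s }⟩

/-- Componentwise deletion of the first coordinate (identity on unary relations). -/
def prRel (ρ : SRel S A) : SRel S A :=
  match ρ with
  | ⟨0, r⟩ => ⟨0, r⟩
  | ⟨m + 1, r⟩ => ⟨m, fun s => { b | ∃ a ∈ r s, b = fun j => a j.succ }⟩

/-- Componentwise Cartesian product. -/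
def prodRel (ρ ρ' : SRel S A) : SRel S A :=
  ⟨ρ.m + ρ'.m + 1, fun s =>
    { c | (fun i : Fin (ρ.m + 1) => c ⟨i.val, by have := i.isLt; omega⟩) ∈ ρ.rel s ∧
          (fun i : Fin (ρ'.m + 1) => c ⟨ρ.m + 1 + i.val, by have := i.isLt; omega⟩) ∈ ρ'.rel s }⟩

/-- Componentwise intersection; empty if the arities differ. -/
def interRel (ρ ρ' : SRel S A) : SRel S A :=
  if h : ρ.m = ρ'.m then
    ⟨ρ.m, fun s => { a | a ∈ ρ.rel s ∧
        (fun i : Fin (ρ'.m + 1) => a (Fin.cast (by omega) i)) ∈ ρ'.rel s }⟩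
  else ⟨ρ.m, fun _ => ∅⟩

/-- Index translation `μ_v(ρ) := (ρ_{sv})_{s ∈ S}`. -/
def muRel (v : S) (ρ : SRel S A) : SRel S A := ⟨ρ.m, fun s => ρ.rel (s * v)⟩

/-- `v`-self-intersection `(⊓^v ρ)_s := ⋂ { ρ_{s'} ∣ s'v = s }`
(an empty intersection being the full relation). -/
def selfInterRel (v : S) (ρ : SRel S A) : SRel S A :=
  ⟨ρ.m, fun s => { a | ∀ s' : S, s' * v = s → a ∈ ρ.rel s' }⟩

/-- A set of `S`-relations is an `S`-relational clone if it contains `δ^S` and is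
closed under `ζ`, `τ`, `pr`, `×`, `∧`, `μ_v` and `⊓^v`. -/
def IsSRelClone (Q : Set (SRel S A)) : Prop :=
  deltaS S A ∈ Q ∧
  (∀ ρ ∈ Q, cycRel ρ ∈ Q) ∧
  (∀ ρ ∈ Q, swapRel ρ ∈ Q) ∧
  (∀ ρ ∈ Q, prRel ρ ∈ Q) ∧
  (∀ ρ ∈ Q, ∀ ρ' ∈ Q, prodRel ρ ρ' ∈ Q) ∧
  (∀ ρ ∈ Q, ∀ ρ' ∈ Q, interRel ρ ρ' ∈ Q) ∧
  (∀ (v : S), ∀ ρ ∈ Q, muRel v ρ ∈ Q) ∧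
  (∀ (v : S), ∀ ρ ∈ Q, selfInterRel v ρ ∈ Q)

/-- The `S`-relational clone generated by `Q`. -/
def SRg (Q : Set (SRel S A)) : Set (SRel S A) := ⋂₀ { R | IsSRelClone R ∧ Q ⊆ R }

/-- `Γ_F(ρ)`: the least `S`-relation of the same arity containing `ρ` and invariant
for `F` (defined as the intersection of all such). -/
def Gamma (F : Set (SOp S A)) (ρ : SRel S A) : SRel S A :=
  ⟨ρ.m, fun s => ⋂ g ∈ { g : S → Set (Fin (ρ.m + 1) → A) |
      (⟨ρ.m, g⟩ : SRel S A) ∈ SInv F ∧ ∀ t, ρ.rel t ⊆ g t }, g s⟩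

/-- Trivial `S`-operations (trivial projections): projections whose essential
argument has signum `e`. -/
def SJ (S A : Type*) [Monoid S] : Set (SOp S A) :=
  { f | ∃ i : Fin (f.n + 1), f.sgn i = 1 ∧ ∀ x, f.fn x = x i }

/-- A diagonal relation: empty, or defined by an equivalence relation on the coordinates. -/
def IsDiagonal {A : Type*} {m : ℕ} (σ : Set (Fin m → A)) : Prop :=
  σ = ∅ ∨ ∃ ε : Fin m → Fin m → Prop, Equivalence ε ∧ σ = { a | ∀ i j, ε i j → a i = a j }

/-- `S`-diagonal `S`-relations. -/
def SD (S A : Type*) [Monoid S] : Set (SRel S A) :=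
  { ρ | (∀ s, IsDiagonal (ρ.rel s)) ∧
      ∀ s t : S, ({ x | ∃ u, x = u * s } : Set S) ⊆ { x | ∃ u, x = u * t } →
        ρ.rel s ⊆ ρ.rel t }

/-- Projection of an `S`-relation to the rows `z 0, …, z t` (componentwise). -/
def prMulti {t : ℕ} (ρ : SRel S A) (z : Fin (t + 1) → Fin (ρ.m + 1)) : SRel S A :=
  ⟨t, fun s => { b | ∃ a ∈ ρ.rel s, b = fun j => a (z j) }⟩

/-- One step of the inductive construction of `Γ_F(ρ)`:
`R s ∪ { f(r₁,…,r_n) ∣ f ∈ F, r_j ∈ R (sgn(f)_j * s) }`. -/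
def gammaStep (F : Set (SOp S A)) {m : ℕ}
    (R : S → Set (Fin (m + 1) → A)) : S → Set (Fin (m + 1) → A) :=
  fun s => R s ∪ { b | ∃ f ∈ F, ∃ r : Fin (f.n + 1) → (Fin (m + 1) → A),
    (∀ j, r j ∈ R (f.sgn j * s)) ∧ b = fun z => f.fn fun j => r j z }

/-- `χ` is (a presentation of) the `S`-relation `χ^λ`: its rows are enumerated by
*all* tuples of `A^n` via `e`, and its `s`-component consists exactly of the columns
`κ_i` with `λ i = s`. -/
def IsChi {n : ℕ} (lam : Fin n → S) (χ : SRel S A) : Prop :=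
  ∃ e : Fin (χ.m + 1) ≃ (Fin n → A),
    ∀ s, χ.rel s = { c | ∃ i, lam i = s ∧ c = fun z => e z i }

/-- `γ_Q(ρ)`: the least `S`-relation of the same arity containing `ρ` and belonging
to the `S`-relational clone generated by `Q` (defined as the intersection of all such). -/
def gammaQ (Q : Set (SRel S A)) (ρ : SRel S A) : SRel S A :=
  ⟨ρ.m, fun s => ⋂ g ∈ { g : S → Set (Fin (ρ.m + 1) → A) |
      (⟨ρ.m, g⟩ : SRel S A) ∈ SRg Q ∧ ∀ t, ρ.rel t ⊆ g t }, g s⟩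

/-- `π`-dual of an `S`-operation. -/
def opPi (π : Equiv.Perm A) (f : SOp S A) : SOp S A :=
  ⟨f.n, fun x => π (f.fn fun i => π.symm (x i)), f.sgn⟩

/-- `π`-dual of an `S`-relation. -/
def relPi (π : Equiv.Perm A) (ρ : SRel S A) : SRel S A :=
  ⟨ρ.m, fun s => { b | ∃ a ∈ ρ.rel s, b = fun i => π (a i) }⟩

/-- `h`-dual of an `S`-operation (only the signum changes). -/
def opH (h : S ≃* S) (f : SOp S A) : SOp S A :=
  ⟨f.n, f.fn, fun i => h (f.sgn i)⟩

/-- `h`-dual of an `S`-relation: `ρ^h := (ρ_{h⁻¹(s)})_{s ∈ S}`. -/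
def relH (h : S ≃* S) (ρ : SRel S A) : SRel S A :=
  ⟨ρ.m, fun s => ρ.rel (h.symm s)⟩

end

/-- An ordinary (unsigned) operation on `A`. -/
structure UOp (A : Type*) where
  n : ℕ
  fn : (Fin (n + 1) → A) → A

/-- An ordinary (unsigned) relation on `A`. -/
structure URel (A : Type*) where
  m : ℕ
  rel : Set (Fin (m + 1) → A)

/-- Ordinary preservation of a relation by an operation. -/
def UPreserves {A : Type*} (f : UOp A) (σ : URel A) : Prop :=
  ∀ r : Fin (f.n + 1) → (Fin (σ.m + 1) → A),
    (∀ i, r i ∈ σ.rel) → (fun j => f.fn fun i => r i j) ∈ σ.rel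

/-- Polymorphisms of a set of ordinary relations. -/
def UPol {A : Type*} (R : Set (URel A)) : Set (UOp A) := { f | ∀ σ ∈ R, UPreserves f σ }

/-- A clone: contains all projections and is closed under composition. -/
def IsClone {A : Type*} (C : Set (UOp A)) : Prop :=
  (∀ (n : ℕ) (i : Fin (n + 1)), (⟨n, fun x => x i⟩ : UOp A) ∈ C) ∧
  (∀ f ∈ C, ∀ (m : ℕ) (g : Fin (f.n + 1) → ((Fin (m + 1) → A) → A)),
    (∀ i, (⟨m, g i⟩ : UOp A) ∈ C) → (⟨m, fun x => f.fn fun i => g i x⟩ : UOp A) ∈ C)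

/-- The clone generated by a set of operations. -/
def CloneGen {A : Type*} (G : Set (UOp A)) : Set (UOp A) := ⋂₀ { C | IsClone C ∧ G ⊆ C }

section Aux

variable {S A : Type*} [Monoid S]

theorem isSRelClone_SRg (Q : Set (SRel S A)) : IsSRelClone (SRg Q) :=
  ⟨fun _ hR => hR.1.1,
   fun ρ hρ R hR => hR.1.2.1 ρ (hρ R hR),
   fun ρ hρ R hR => hR.1.2.2.1 ρ (hρ R hR),
   fun ρ hρ R hR => hR.1.2.2.2.1 ρ (hρ R hR),
   fun ρ hρ ρ' hρ' R hR => hR.1.2.2.2.2.1 ρ (hρ R hR) ρ' (hρ' R hR),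
   fun ρ hρ ρ' hρ' R hR => hR.1.2.2.2.2.2.1 ρ (hρ R hR) ρ' (hρ' R hR),
   fun v ρ hρ R hR => hR.1.2.2.2.2.2.2.1 v ρ (hρ R hR),
   fun v ρ hρ R hR => hR.1.2.2.2.2.2.2.2 v ρ (hρ R hR)⟩

theorem Q_subset_SRg (Q : Set (SRel S A)) : Q ⊆ SRg Q := fun _ hρ _ hR => hR.2 hρ

/-- Membership in the generated relational clone, in "indexed family" form. -/
def memR (Q : Set (SRel S A)) (M : ℕ) (g : S → Set (Fin (M + 1) → A)) : Prop :=
  (⟨M, g⟩ : SRel S A) ∈ SRg Q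

theorem memR_congr {Q : Set (SRel S A)} {M : ℕ} {g g' : S → Set (Fin (M + 1) → A)}
    (h : ∀ s, g s = g' s) (hg : memR Q M g) : memR Q M g' := by
  have : g = g' := funext h
  exact this ▸ hg

theorem memR_of_mem {Q : Set (SRel S A)} {ρ : SRel S A} (h : ρ ∈ Q) : memR Q ρ.m ρ.rel := by
  have := Q_subset_SRg Q h
  exact this

theorem memR_deltaS (Q : Set (SRel S A)) :
    memR Q 1 (fun _ => { a : Fin 2 → A | a 0 = a 1 }) :=
  (isSRelClone_SRg Q).1

theorem memR_mu {Q : Set (SRel S A)} {M : ℕ} {g} (v : S) (h : memR Q M g) :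
    memR Q M (fun s => g (s * v)) :=
  (isSRelClone_SRg Q).2.2.2.2.2.2.1 v _ h

theorem memR_pr {Q : Set (SRel S A)} {M : ℕ} {g : S → Set (Fin (M + 2) → A)}
    (h : memR Q (M + 1) g) :
    memR Q M (fun s => { b | ∃ a ∈ g s, b = fun j => a j.succ }) :=
  (isSRelClone_SRg Q).2.2.2.1 _ h

theorem memR_prod {Q : Set (SRel S A)} {M M' : ℕ} {g : S → Set (Fin (M + 1) → A)}
    {g' : S → Set (Fin (M' + 1) → A)} (h : memR Q M g) (h' : memR Q M' g') :
    memR Q (M + M' + 1) (fun s =>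
      { c | (fun i : Fin (M + 1) => c ⟨i.val, by have := i.isLt; omega⟩) ∈ g s ∧
            (fun i : Fin (M' + 1) => c ⟨M + 1 + i.val, by have := i.isLt; omega⟩) ∈ g' s }) :=
  (isSRelClone_SRg Q).2.2.2.2.1 _ h _ h'

theorem memR_inter {Q : Set (SRel S A)} {M : ℕ} {g g' : S → Set (Fin (M + 1) → A)}
    (h : memR Q M g) (h' : memR Q M g') :
    memR Q M (fun s => g s ∩ g' s) := by
  have h2 := (isSRelClone_SRg Q).2.2.2.2.2.1 _ h _ h'
  have : interRel (⟨M, g⟩ : SRel S A) ⟨M, g'⟩ = ⟨M, fun s => g s ∩ g' s⟩ := by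
    rw [interRel, dif_pos rfl]
    rfl
  rwa [this] at h2

theorem memR_full (Q : Set (SRel S A)) : ∀ M : ℕ, memR Q M (fun _ => Set.univ)
  | 0 => by
      have h := (isSRelClone_SRg Q).2.2.2.1 _ (memR_deltaS Q)
      have : prRel (⟨1, fun _ => { a : Fin 2 → A | a 0 = a 1 }⟩ : SRel S A) =
          ⟨0, fun _ => Set.univ⟩ := by
        rw [prRel]
        congr 1
        funext s
        ext b
        simp only [Set.mem_setOf_eq, Set.mem_univ, iff_true]
        refine ⟨fun _ => b 0, rfl, funext fun j => ?_⟩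
        have : j = 0 := Fin.ext (by omega)
        subst this; rfl
      rwa [this] at h
  | (M + 1) => by
      have h := memR_prod (memR_full Q M) (memR_full Q 0)
      exact memR_congr (fun s => by ext c; simp) h

end Aux
section Aux2

variable {S A : Type*} [Monoid S] [Finite S] [Finite A]

theorem memR_biInter_finite {Q : Set (SRel S A)} {M : ℕ}
    {T : Set (S → Set (Fin (M + 1) → A))} (hT : T.Finite) :
    (∀ g ∈ T, memR Q M g) → memR Q M (fun s => ⋂ g ∈ T, g s) := by
  refine Set.Finite.induction_on (motive := fun T _ => (∀ g ∈ T, memR Q M g) →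
    memR Q M (fun s => ⋂ g ∈ T, g s)) _ hT ?_ ?_
  · intro _
    exact memR_congr (fun s => by simp) (memR_full Q M)
  · intro a T' _ _ ih h
    have h2 := memR_inter (h a (Set.mem_insert _ _))
      (ih fun g hg => h g (Set.mem_insert_of_mem _ hg))
    exact memR_congr (fun s => by rw [Set.biInter_insert]) h2

theorem memR_iInter {Q : Set (SRel S A)} {M : ℕ} {ι : Type*}
    (g : ι → S → Set (Fin (M + 1) → A)) (hg : ∀ k, memR Q M (g k)) :
    memR Q M (fun s => ⋂ k, g k s) := by
  have hfin : (Set.range g).Finite := Set.toFinite _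
  have h2 := memR_biInter_finite hfin (fun g' hg' => by
    obtain ⟨k, rfl⟩ := hg'; exact hg k)
  refine memR_congr (fun s => ?_) h2
  ext b
  simp

theorem memR_perm {Q : Set (SRel S A)} {M : ℕ} (π : Equiv.Perm (Fin (M + 1)))
    {g} (hg : memR Q M g) :
    memR Q M (fun s => { b | (fun i => b (π i)) ∈ g s }) := by
  set H : Set (Equiv.Perm (Fin (M + 1))) :=
    { π | ∀ g, memR Q M g → memR Q M (fun s => { b | (fun i => b (π i)) ∈ g s }) } with hH
  have hone : (1 : Equiv.Perm (Fin (M + 1))) ∈ H := fun g hg => hg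
  have hmul : ∀ π₁ π₂, π₁ ∈ H → π₂ ∈ H → π₁ * π₂ ∈ H := by
    intro π₁ π₂ h1 h2 g hg
    exact h1 _ (h2 g hg)
  have hpow : ∀ (k : ℕ) π, π ∈ H → π ^ k ∈ H := by
    intro k
    induction k with
    | zero => intro π _; rw [pow_zero]; exact hone
    | succ k ih => intro π hπ; rw [pow_succ]; exact hmul _ _ (ih π hπ) hπ
  have hinv : ∀ π, π ∈ H → π⁻¹ ∈ H := by
    intro π hπ
    have hpos : 0 < orderOf π := orderOf_pos π
    have : π⁻¹ = π ^ (orderOf π - 1) := by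
      apply inv_eq_of_mul_eq_one_right
      rw [← pow_succ', Nat.sub_add_cancel hpos]
      exact pow_orderOf_eq_one π
    rw [this]
    exact hpow _ π hπ
  have hcH : (⟨fun i => i - 1, fun i => i + 1, fun i => by simp, fun i => by simp⟩ :
      Equiv.Perm (Fin (M + 1))) ∈ H := fun g hg =>
    (isSRelClone_SRg Q).2.1 ⟨M, g⟩ hg
  have hsw : Equiv.swap (0 : Fin (M + 1)) 1 ∈ H := fun g hg =>
    (isSRelClone_SRg Q).2.2.1 ⟨M, g⟩ hg
  suffices hπ : π ∈ H by exact hπ g hg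
  rcases M with _ | M'
  · have : π = 1 := Equiv.ext fun i => Fin.ext (by omega)
    rw [this]; exact hone
  · have hgen := Equiv.Perm.closure_cycle_adjacent_swap (σ := finRotate (M' + 2))
      isCycle_finRotate support_finRotate 0
    have hrot : finRotate (M' + 2) ∈ H := by
      have heq : finRotate (M' + 2) =
          (⟨fun i => i - 1, fun i => i + 1, fun i => by simp, fun i => by simp⟩ :
            Equiv.Perm (Fin (M' + 2)))⁻¹ := by
        apply Equiv.ext; intro i
        rw [finRotate_succ_apply]; rfl
      rw [heq]
      exact hinv _ hcH
    have hswap' : Equiv.swap (0 : Fin (M' + 2)) (finRotate (M' + 2) 0) = Equiv.swap 0 1 := by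
      rw [finRotate_succ_apply, zero_add]
    have hmem : π ∈ Subgroup.closure
        ({finRotate (M' + 2), Equiv.swap 0 (finRotate (M' + 2) 0)} :
          Set (Equiv.Perm (Fin (M' + 2)))) := by
      rw [hgen]; exact Subgroup.mem_top π
    refine Subgroup.closure_induction (p := fun x _ => x ∈ H) ?_ hone ?_ ?_ hmem
    · intro x hx
      rcases hx with rfl | hx
      · exact hrot
      · rw [Set.mem_singleton_iff] at hx
        rw [hx, hswap']
        exact hsw
    · intro x y _ _ hx hy; exact hmul x y hx hy
    · intro x _ hx; exact hinv x hx

end Aux2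
section Aux3

variable {S A : Type*} [Monoid S]

theorem memR_cast {Q : Set (SRel S A)} {M N : ℕ} (h : M = N) {g}
    (hg : memR Q M g) :
    memR Q N (fun s => { b | (fun i : Fin (M + 1) => b (Fin.cast (by omega) i)) ∈ g s }) := by
  subst h
  exact memR_congr (fun s => by ext b; exact Iff.rfl) hg

theorem memR_drop {Q : Set (SRel S A)} (M : ℕ) :
    ∀ (k : ℕ) (g : S → Set (Fin (M + k + 1) → A)), memR Q (M + k) g →
      memR Q M (fun s => { b | ∃ a ∈ g s,
        b = fun j : Fin (M + 1) => a ⟨k + j.val, by have := j.isLt; omega⟩ })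
  | 0, g, hg => by
      refine memR_congr (fun s => ?_) hg
      ext b
      constructor
      · intro hb
        exact ⟨b, hb, funext fun j => congrArg b (Fin.ext (by simp))⟩
      · rintro ⟨a, ha, rfl⟩
        have : (fun j : Fin (M + 1) => a ⟨0 + j.val, by have := j.isLt; omega⟩) = a :=
          funext fun j => congrArg a (Fin.ext (by simp))
        rw [this]; exact ha
  | (k + 1), g, hg => by
      have h1 := memR_pr (M := M + k)
        (g := fun s => g s) hg
      have h2 := memR_drop M k _ h1
      refine memR_congr (fun s => ?_) h2
      ext b
      simp only [Set.mem_setOf_eq]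
      constructor
      · rintro ⟨a', ⟨a, ha, rfl⟩, rfl⟩
        refine ⟨a, ha, funext fun j => ?_⟩
        show a (Fin.succ _) = a _
        exact congrArg a (Fin.ext (by simp [Fin.val_succ]; omega))
      · rintro ⟨a, ha, rfl⟩
        refine ⟨fun j2 => a j2.succ, ⟨a, ha, rfl⟩, funext fun j => ?_⟩
        show a _ = a (Fin.succ _)
        exact congrArg a (Fin.ext (by simp [Fin.val_succ]; omega))

theorem memR_eq01 {Q : Set (SRel S A)} (K : ℕ) :
    memR Q (K + 1) (fun _ => { c : Fin (K + 2) → A | c 0 = c 1 }) := by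
  rcases K with _ | K'
  · exact memR_deltaS Q
  · have h := memR_prod (memR_deltaS Q) (memR_full Q K')
    have h2 := memR_cast (M := 1 + K' + 1) (N := K' + 2) (by omega) h
    refine memR_congr (fun s => ?_) h2
    ext b
    constructor
    · rintro ⟨h1, -⟩
      simpa using h1
    · intro hb
      exact ⟨by simpa using hb, Set.mem_univ _⟩

end Aux3
section Aux4

variable {S A : Type*} [Monoid S] [Finite S] [Finite A]

theorem memR_eqCoord {Q : Set (SRel S A)} {K : ℕ} (p q : Fin (K + 1)) (hpq : p ≠ q) :
    memR Q K (fun _ => { c | c p = c q }) := by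
  rcases K with _ | K'
  · exact absurd (Fin.ext (by omega)) hpq
  · obtain ⟨π, h0, h1⟩ : ∃ π : Equiv.Perm (Fin (K' + 2)), π 0 = p ∧ π 1 = q := by
      have hq' : Equiv.swap (0 : Fin (K' + 2)) p q ≠ 0 := by
        intro h
        apply hpq
        have := congrArg (Equiv.swap (0 : Fin (K' + 2)) p) h
        rw [Equiv.swap_apply_self, Equiv.swap_apply_left] at this
        exact this.symm
      have h01 : (0 : Fin (K' + 2)) ≠ 1 := Fin.ne_of_val_ne (by simp)
      refine ⟨Equiv.swap 0 p * Equiv.swap 1 (Equiv.swap 0 p q), ?_, ?_⟩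
      · show Equiv.swap 0 p (Equiv.swap 1 (Equiv.swap 0 p q) 0) = p
        rw [Equiv.swap_apply_of_ne_of_ne h01 (Ne.symm hq'), Equiv.swap_apply_left]
      · show Equiv.swap 0 p (Equiv.swap 1 (Equiv.swap 0 p q) 1) = q
        rw [Equiv.swap_apply_left, Equiv.swap_apply_self]
    have h2 := memR_perm π (memR_eq01 (Q := Q) K')
    refine memR_congr (fun s => ?_) h2
    ext b
    simp only [Set.mem_setOf_eq]
    rw [h0, h1]

theorem memR_cyl {Q : Set (SRel S A)} (ρ₀ : SRel S A) (h : memR Q ρ₀.m ρ₀.rel)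
    (M : ℕ) (y : Fin (ρ₀.m + 1) → Fin (M + 1)) :
    memR Q M (fun u => { b | (fun z' => b (y z')) ∈ ρ₀.rel u }) := by
  obtain ⟨m0, rel0⟩ := ρ₀
  simp only at h y ⊢
  have hprod := memR_prod h (memR_full Q M)
  have hdiag := memR_iInter (Q := Q) (ι := Fin (m0 + 1)) (M := m0 + M + 1)
    (fun z' _ => { c : Fin (m0 + M + 2) → A |
      c ⟨z'.val, by have := z'.isLt; omega⟩ =
      c ⟨m0 + 1 + (y z').val, by have := (y z').isLt; omega⟩ })
    (fun z' => memR_eqCoord (⟨z'.val, by have := z'.isLt; omega⟩ : Fin (m0 + M + 2))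
      (⟨m0 + 1 + (y z').val, by have := (y z').isLt; omega⟩ : Fin (m0 + M + 2))
      (Fin.ne_of_val_ne (by have := z'.isLt; simp; omega)))
  have hint := memR_inter hprod hdiag
  have hcast := memR_cast (M := m0 + M + 1) (N := M + (m0 + 1)) (by omega) hint
  have hdrop := memR_drop M (m0 + 1) _ hcast
  refine memR_congr (fun u => ?_) hdrop
  ext b
  simp only [Set.mem_setOf_eq, Set.mem_inter_iff, Set.mem_iInter, Set.mem_univ, and_true]
  constructor
  · rintro ⟨a, ha, rfl⟩
    have ha1 := ha.1
    have ha2 := ha.2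
    have key : (fun z' => (fun j : Fin (M + 1) =>
        a ⟨m0 + 1 + j.val, by have := j.isLt; omega⟩) (y z')) =
        (fun i : Fin (m0 + 1) =>
          (fun i2 : Fin (m0 + M + 2) => a (Fin.cast (by omega) i2))
            ⟨i.val, by have := i.isLt; omega⟩) := by
      funext z'
      have h2 := ha2 z'
      refine Eq.trans ?_ h2.symm
      exact congrArg a (Fin.ext (by simp))
    rw [key]
    exact ha1
  · intro hb
    classical
    refine ⟨fun i => if hi : i.val < m0 + 1 then b (y ⟨i.val, hi⟩)
      else b ⟨i.val - (m0 + 1), by have := i.isLt; omega⟩, ⟨⟨?_, ?_⟩, ?_⟩⟩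
    · -- first block lies in rel0 u
      have : (fun i : Fin (m0 + 1) =>
          (fun i2 : Fin (m0 + M + 2) =>
            (fun i3 : Fin (M + (m0 + 1) + 1) =>
              if hi : i3.val < m0 + 1 then b (y ⟨i3.val, hi⟩)
              else b ⟨i3.val - (m0 + 1), by have := i3.isLt; omega⟩)
              (Fin.cast (by omega) i2)) ⟨i.val, by have := i.isLt; omega⟩) =
          (fun z' => b (y z')) := by
        funext i
        simp only [Fin.cast_mk]
        rw [dif_pos (by have := i.isLt; omega)]
      rw [this]
      exact hb
    · -- diagonal conditions
      intro z'
      simp only [Set.mem_setOf_eq, Fin.cast_mk]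
      rw [dif_pos (by have := z'.isLt; omega), dif_neg (by omega)]
      exact congrArg b (Fin.ext (by simp))
    · -- b equals the tail
      funext j
      simp only
      rw [dif_neg (by omega)]
      exact (congrArg b (Fin.ext (by simp))).symm

end Aux4
section Aux5

variable {S A : Type*} [Monoid S]

theorem pres_deltaS (f : SOp S A) : SPreserves f (deltaS S A) := by
  intro s r hr
  exact congrArg f.fn (funext fun i => hr i)

theorem pres_cyc {f : SOp S A} {ρ : SRel S A} (h : SPreserves f ρ) :
    SPreserves f (cycRel ρ) := by
  obtain ⟨m, rel⟩ := ρ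
  show SPreserves f ⟨m, fun s => { b | (fun i => b (i - 1)) ∈ rel s }⟩
  intro s r hr
  exact h s (fun i j => r i (j - 1)) hr

theorem pres_swap {f : SOp S A} {ρ : SRel S A} (h : SPreserves f ρ) :
    SPreserves f (swapRel ρ) := by
  obtain ⟨m, rel⟩ := ρ
  show SPreserves f ⟨m, fun s => { b | (fun i => b (Equiv.swap 0 1 i)) ∈ rel s }⟩
  intro s r hr
  exact h s (fun i j => r i (Equiv.swap 0 1 j)) hr

theorem pres_pr {f : SOp S A} {ρ : SRel S A} (h : SPreserves f ρ) :
    SPreserves f (prRel ρ) := by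
  obtain ⟨m, rel⟩ := ρ
  rcases m with _ | m
  · exact h
  · intro s r hr
    choose a ha hra using hr
    refine ⟨fun j => f.fn fun i => a i j, h s a ha, funext fun j => ?_⟩
    have : ∀ i, r i j = a i j.succ := fun i => by rw [hra i]; rfl
    exact congrArg f.fn (funext fun i => this i)

theorem pres_prod {f : SOp S A} {ρ ρ' : SRel S A} (h : SPreserves f ρ)
    (h' : SPreserves f ρ') : SPreserves f (prodRel ρ ρ') := by
  obtain ⟨m, rel⟩ := ρ
  obtain ⟨m', rel'⟩ := ρ'
  show SPreserves f ⟨m + m' + 1, fun s =>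
    { c | (fun i : Fin (m + 1) => c ⟨i.val, by have := i.isLt; omega⟩) ∈ rel s ∧
          (fun i : Fin (m' + 1) => c ⟨m + 1 + i.val, by have := i.isLt; omega⟩) ∈ rel' s }⟩
  intro s r hr
  exact ⟨h s (fun (i : Fin (f.n + 1)) (i2 : Fin (m + 1)) =>
           r i (⟨i2.val, by have := i2.isLt; omega⟩ : Fin (m + m' + 1 + 1)))
           (fun i => (hr i).1),
         h' s (fun (i : Fin (f.n + 1)) (i2 : Fin (m' + 1)) =>
           r i (⟨m + 1 + i2.val, by have := i2.isLt; omega⟩ : Fin (m + m' + 1 + 1)))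
           (fun i => (hr i).2)⟩

theorem pres_inter {f : SOp S A} {ρ ρ' : SRel S A} (h : SPreserves f ρ)
    (h' : SPreserves f ρ') : SPreserves f (interRel ρ ρ') := by
  obtain ⟨m, rel⟩ := ρ
  obtain ⟨m', rel'⟩ := ρ'
  rcases eq_or_ne m m' with rfl | hne
  · have heq : interRel (⟨m, rel⟩ : SRel S A) ⟨m, rel'⟩ =
        ⟨m, fun s => { a | a ∈ rel s ∧
          (fun i : Fin (m + 1) => a (Fin.cast (by omega) i)) ∈ rel' s }⟩ := by
      rw [interRel, dif_pos rfl]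
    rw [heq]
    intro s r hr
    exact ⟨h s r (fun i => (hr i).1), h' s r (fun i => (hr i).2)⟩
  · have heq : interRel (⟨m, rel⟩ : SRel S A) ⟨m', rel'⟩ =
        ⟨m, fun _ => (∅ : Set (Fin (m + 1) → A))⟩ := by
      rw [interRel, dif_neg hne]
    rw [heq]
    intro s r hr
    exact absurd (hr 0) (Set.notMem_empty _)

theorem pres_mu {f : SOp S A} {ρ : SRel S A} (v : S) (h : SPreserves f ρ) :
    SPreserves f (muRel v ρ) := by
  obtain ⟨m, rel⟩ := ρ
  show SPreserves f ⟨m, fun s => rel (s * v)⟩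
  intro s r hr
  refine h (s * v) r (fun i => ?_)
  have h2 : r i ∈ rel (f.sgn i * s * v) := hr i
  rwa [mul_assoc] at h2

theorem pres_selfInter {f : SOp S A} {ρ : SRel S A} (v : S) (h : SPreserves f ρ) :
    SPreserves f (selfInterRel v ρ) := by
  obtain ⟨m, rel⟩ := ρ
  show SPreserves f ⟨m, fun s => { a | ∀ s' : S, s' * v = s → a ∈ rel s' }⟩
  intro s r hr s' hs'
  refine h s' r (fun i => hr i (f.sgn i * s') ?_)
  rw [mul_assoc, hs']

theorem isSRelClone_SInv (F : Set (SOp S A)) : IsSRelClone (SInv F) :=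
  ⟨fun f _ => pres_deltaS f,
   fun _ hρ f hf => pres_cyc (hρ f hf),
   fun _ hρ f hf => pres_swap (hρ f hf),
   fun _ hρ f hf => pres_pr (hρ f hf),
   fun _ hρ _ hρ' f hf => pres_prod (hρ f hf) (hρ' f hf),
   fun _ hρ _ hρ' f hf => pres_inter (hρ f hf) (hρ' f hf),
   fun v _ hρ f hf => pres_mu v (hρ f hf),
   fun v _ hρ f hf => pres_selfInter v (hρ f hf)⟩

theorem SRg_subset_SInv (Q : Set (SRel S A)) : SRg Q ⊆ SInv (SPol Q) :=
  fun _ hρ => hρ _ ⟨isSRelClone_SInv _, fun ρ' hρ' f hf => hf ρ' hρ'⟩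

end Aux5
section Aux6

variable {S A : Type*} [Monoid S]

theorem idOp_mem_SPol (Q : Set (SRel S A)) : idOp S A ∈ SPol Q := by
  intro ρ _ s r hr
  have h0 : r 0 ∈ ρ.rel (1 * s) := hr 0
  rw [one_mul] at h0
  exact h0

theorem gammaStep_invariant {Q : Set (SRel S A)} {M : ℕ} (R0 : S → Set (Fin (M + 1) → A))
    (f0 : SOp S A) (hf0 : f0 ∈ SPol Q) :
    SPreserves f0 ⟨M, gammaStep (SPol Q) R0⟩ := by
  classical
  intro s r hr
  have hex : ∀ i : Fin (f0.n + 1), ∃ g : SOp S A, g ∈ SPol Q ∧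
      ∃ c : Fin (g.n + 1) → (Fin (M + 1) → A),
        (∀ j, c j ∈ R0 (g.sgn j * (f0.sgn i * s))) ∧
        r i = fun z => g.fn fun j => c j z := by
    intro i
    rcases hr i with hl | ⟨g, hg, c, hc, hrc⟩
    · refine ⟨idOp S A, idOp_mem_SPol Q, fun _ => r i, fun j => ?_, rfl⟩
      have : (idOp S A).sgn j * (f0.sgn i * s) = 1 * (f0.sgn i * s) := rfl
      rw [this, one_mul]
      exact hl
    · exact ⟨g, hg, c, fun j => hc j, hrc⟩
  choose p hpF c hc hrc using hex
  have hKne : Nonempty ((i : Fin (f0.n + 1)) × Fin ((p i).n + 1)) := ⟨⟨0, 0⟩⟩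
  have hKcard : 0 < Fintype.card ((i : Fin (f0.n + 1)) × Fin ((p i).n + 1)) :=
    Fintype.card_pos_iff.mpr hKne
  obtain ⟨N, hN⟩ : ∃ N, Fintype.card ((i : Fin (f0.n + 1)) × Fin ((p i).n + 1)) = N + 1 :=
    ⟨Fintype.card ((i : Fin (f0.n + 1)) × Fin ((p i).n + 1)) - 1, by omega⟩
  let E : ((i : Fin (f0.n + 1)) × Fin ((p i).n + 1)) ≃ Fin (N + 1) :=
    (Fintype.equivFin _).trans (finCongr hN)
  refine Set.mem_union_right _ ?_
  refine ⟨⟨N, fun x => f0.fn fun i => (p i).fn fun j => x (E ⟨i, j⟩),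
    fun k => (p (E.symm k).1).sgn (E.symm k).2 * f0.sgn (E.symm k).1⟩, ?_,
    fun k => c (E.symm k).1 (E.symm k).2, fun k => ?_, ?_⟩
  · -- membership in SPol Q
    intro ρ hρ t d hd
    refine hf0 ρ hρ t (fun i w => (p i).fn fun j => d (E ⟨i, j⟩) w) (fun i => ?_)
    refine hpF i ρ hρ (f0.sgn i * t) (fun j => d (E ⟨i, j⟩)) (fun j => ?_)
    have hthis : d (E ⟨i, j⟩) ∈ ρ.rel
        ((p (E.symm (E ⟨i, j⟩)).1).sgn (E.symm (E ⟨i, j⟩)).2 *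
          f0.sgn (E.symm (E ⟨i, j⟩)).1 * t) := hd (E ⟨i, j⟩)
    have he : E.symm (E ⟨i, j⟩) = ⟨i, j⟩ := E.symm_apply_apply _
    rw [he] at hthis
    rwa [mul_assoc] at hthis
  · -- rows lie in R0 at the right index
    have hthis := hc (E.symm k).1 (E.symm k).2
    show c (E.symm k).1 (E.symm k).2 ∈
      R0 ((p (E.symm k).1).sgn (E.symm k).2 * f0.sgn (E.symm k).1 * s)
    rwa [mul_assoc]
  · -- the value equality
    funext z
    show f0.fn (fun i => r i z) =
      f0.fn fun i => (p i).fn fun j => c (E.symm (E ⟨i, j⟩)).1 (E.symm (E ⟨i, j⟩)).2 z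
    refine congrArg f0.fn (funext fun i => ?_)
    rw [hrc i]
    refine congrArg (p i).fn (funext fun j => ?_)
    exact (congrArg (fun k : (i : Fin (f0.n + 1)) × Fin ((p i).n + 1) => c k.1 k.2 z)
      (E.symm_apply_apply ⟨i, j⟩)).symm

theorem gammaStep_least {Q : Set (SRel S A)} {M : ℕ} {R0 g : S → Set (Fin (M + 1) → A)}
    (hg : (⟨M, g⟩ : SRel S A) ∈ SInv (SPol Q))
    (hcont : ∀ t, R0 t ⊆ g t) : ∀ s, gammaStep (SPol Q) R0 s ⊆ g s := by
  intro s b hb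
  rcases hb with hb | ⟨f, hf, r, hr, rfl⟩
  · exact hcont s hb
  · exact hg f hf s r (fun j => hcont _ (hr j))

theorem Gamma_rel_eq (Q : Set (SRel S A)) (χ : SRel S A) (s : S) :
    (Gamma (SPol Q) χ).rel s = gammaStep (SPol Q) χ.rel s := by
  have hinv : (⟨χ.m, gammaStep (SPol Q) χ.rel⟩ : SRel S A) ∈ SInv (SPol Q) :=
    fun f hf => gammaStep_invariant χ.rel f hf
  have hcont : ∀ t, χ.rel t ⊆ gammaStep (SPol Q) χ.rel t :=
    fun t => Set.subset_union_left
  apply subset_antisymm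
  · intro b hb
    exact Set.mem_iInter₂.mp hb _ ⟨hinv, hcont⟩
  · intro b hb
    refine Set.mem_iInter₂.mpr (fun g hg => ?_)
    exact gammaStep_least hg.1 hg.2 s hb

end Aux6
section Aux7

variable {S A : Type*} [Monoid S]

/-- The building blocks of the relational-clone witness for `Γ_{SPol Q}(χ^λ)_e`. -/
def gfam (Q : Set (SRel S A)) {n M : ℕ} (lam : Fin (n + 1) → S)
    (e : Fin (M + 1) ≃ (Fin (n + 1) → A))
    (k : (ρ : SRel S A) × ((Fin (ρ.m + 1) → (Fin (n + 1) → A)) × S)) (t : S) :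
    Set (Fin (M + 1) → A) :=
  ⋂ (_ : k.1 ∈ Q ∧ ∀ i, (fun z' => k.2.1 z' i) ∈ k.1.rel (lam i * k.2.2)),
    { b | (fun z' => b (e.symm (k.2.1 z'))) ∈ k.1.rel (t * k.2.2) }

theorem memR_gfam [Finite S] [Finite A] (Q : Set (SRel S A)) {n M : ℕ}
    (lam : Fin (n + 1) → S) (e : Fin (M + 1) ≃ (Fin (n + 1) → A))
    (k : (ρ : SRel S A) × ((Fin (ρ.m + 1) → (Fin (n + 1) → A)) × S)) :
    memR Q M (fun t => gfam Q lam e k t) := by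
  classical
  by_cases hk : k.1 ∈ Q ∧ ∀ i, (fun z' => k.2.1 z' i) ∈ k.1.rel (lam i * k.2.2)
  · have hcyl := memR_cyl (Q := Q) k.1 (memR_of_mem hk.1) M (fun z' => e.symm (k.2.1 z'))
    have hmu := memR_mu k.2.2 hcyl
    refine memR_congr (fun t => ?_) hmu
    ext b
    simp only [Set.mem_setOf_eq, gfam, Set.mem_iInter]
    exact ⟨fun h _ => h, fun h => h hk⟩
  · refine memR_congr (fun t => ?_) (memR_full Q M)
    ext b
    simp only [Set.mem_univ, gfam, Set.mem_iInter, true_iff]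
    intro h
    exact absurd h hk

theorem chi_subset_gfam (Q : Set (SRel S A)) {n : ℕ} (lam : Fin (n + 1) → S)
    (χ : SRel S A) (e : Fin (χ.m + 1) ≃ (Fin (n + 1) → A))
    (hrel : ∀ s, χ.rel s = { c | ∃ i, lam i = s ∧ c = fun z => e z i })
    (k : (ρ : SRel S A) × ((Fin (ρ.m + 1) → (Fin (n + 1) → A)) × S)) (t : S) :
    χ.rel t ⊆ gfam Q lam e k t := by
  intro cμ hc
  rw [hrel t] at hc
  obtain ⟨i, hlam, rfl⟩ := hc
  refine Set.mem_iInter.mpr (fun hk => ?_)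
  have h2 := hk.2 i
  rw [hlam] at h2
  have heq : (fun z' => (fun z => e z i) (e.symm (k.2.1 z'))) = fun z' => k.2.1 z' i := by
    funext z'
    show e (e.symm (k.2.1 z')) i = _
    rw [Equiv.apply_symm_apply]
  show (fun z' => (fun z => e z i) (e.symm (k.2.1 z'))) ∈ k.1.rel (t * k.2.2)
  rw [heq]
  exact h2

theorem gfam_one_subset_gammaStep (Q : Set (SRel S A)) {n : ℕ} (lam : Fin (n + 1) → S)
    (χ : SRel S A) (e : Fin (χ.m + 1) ≃ (Fin (n + 1) → A))
    (hrel : ∀ s, χ.rel s = { c | ∃ i, lam i = s ∧ c = fun z => e z i })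
    (b : Fin (χ.m + 1) → A)
    (hb : ∀ k : (ρ : SRel S A) × ((Fin (ρ.m + 1) → (Fin (n + 1) → A)) × S),
      b ∈ gfam Q lam e k 1) :
    b ∈ gammaStep (SPol Q) χ.rel 1 := by
  have hfQ : (⟨n, fun x => b (e.symm x), lam⟩ : SOp S A) ∈ SPol Q := by
    intro ρ hρ u d hd
    have hk : ρ ∈ Q ∧ ∀ i, (fun z' => d i z') ∈ ρ.rel (lam i * u) := ⟨hρ, fun i => hd i⟩
    have hbk := Set.mem_iInter.mp (hb ⟨ρ, (fun z' i => d i z', u)⟩) hk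
    have hbk' : (fun z' => b (e.symm (fun i => d i z'))) ∈ ρ.rel (1 * u) := hbk
    rw [one_mul] at hbk'
    exact hbk'
  refine Set.mem_union_right _ ⟨⟨n, fun x => b (e.symm x), lam⟩, hfQ,
    fun i z => e z i, fun i => ?_, ?_⟩
  · show (fun z => e z i) ∈ χ.rel (lam i * 1)
    rw [hrel (lam i * 1)]
    exact ⟨i, (mul_one (lam i)).symm, rfl⟩
  · funext z
    show b z = b (e.symm (fun i => e z i))
    have : (fun i => e z i) = e z := rfl
    rw [this, Equiv.symm_apply_apply]

end Aux7
/-- For `F := SPol Q` and any signum `λ`, the `e`-components of the two closures of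
`χ^λ` agree: `Γ_F(χ^λ)_e = γ_Q(χ^λ)_e`. -/
theorem Gamma_e_eq_gammaQ_e {S A : Type*} [Monoid S] [Fintype S] [Fintype A]
    (Q : Set (SRel S A)) (n : ℕ) (lam : Fin (n + 1) → S) (χ : SRel S A)
    (hχ : IsChi lam χ) :
    (Gamma (SPol Q) χ).rel 1 = (gammaQ Q χ).rel 1 := by
  obtain ⟨e, hrel⟩ := hχ
  apply Set.Subset.antisymm
  · intro b hb
    refine Set.mem_iInter₂.mpr (fun g hg => ?_)
    exact Set.mem_iInter₂.mp hb g ⟨SRg_subset_SInv Q hg.1, hg.2⟩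
  · intro b hb
    have hσmem : memR Q χ.m (fun t => ⋂ k, gfam Q lam e k t) :=
      memR_iInter _ (fun k => memR_gfam Q lam e k)
    have hσcont : ∀ t, χ.rel t ⊆ ⋂ k, gfam Q lam e k t := fun t =>
      Set.subset_iInter (fun k => chi_subset_gfam Q lam χ e hrel k t)
    have hbσ : b ∈ ⋂ k, gfam Q lam e k 1 :=
      Set.mem_iInter₂.mp hb _ ⟨hσmem, hσcont⟩
    rw [Gamma_rel_eq]
    exact gfam_one_subset_gammaStep Q lam χ e hrel b (Set.mem_iInter.mp hbσ)

end SPreclone
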